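/- arXiv:2001.08415 — 4 statements merged into one kernel-verified Lean document; each statement's English description precedes it below -/
import Mathlib

section
/- For nonnegative constants a, b and σ₀ ≥ 0, the minimizer over s ≥ 0 of the function F(s) = 2as + b + (s - σ₀)² for s ≠ 0 and F(0) = σ₀² is s* = σ₀ - a if σ₀ - a ≥ √b, and s* = 0 otherwise. -/
/-- For nonnegative constants `a, b` and `σ₀ ≥ 0`, the minimizer over `s ≥ 0` of
`F(s) = 2as + b + (s - σ₀)²` for `s ≠ 0`, `F(0) = σ₀²`, is `σ₀ - a` if `σ₀ - a ≥ √b`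
and `0` otherwise. -/
theorem stmt0 (a b σ₀ : ℝ) (ha : 0 ≤ a) (hb : 0 ≤ b) (hσ : 0 ≤ σ₀)
    (F : ℝ → ℝ)
    (hF : ∀ s, F s = if s = 0 then σ₀ ^ 2 else 2 * a * s + b + (s - σ₀) ^ 2) :
    ∀ s, 0 ≤ s →
      F (if Real.sqrt b ≤ σ₀ - a then σ₀ - a else 0) ≤ F s := by
  intro s hs
  have hsb := Real.sqrt_nonneg b
  have hb2 : Real.sqrt b ^ 2 = b := Real.sq_sqrt hb
  rw [hF, hF]
  split_ifs <;>
    first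
    | exact absurd rfl (by assumption)
    | nlinarith [sq_nonneg (s - (σ₀ - a)), sq_nonneg s, sq_nonneg (s - Real.sqrt b),
      sq_nonneg (Real.sqrt b - (σ₀ - a)), mul_nonneg ha hs, mul_nonneg hb hs,
      mul_nonneg hsb hs]
end

section
/- The unconstrained maximizer over s ≥ 0 of f(s) = min(b, [s-a]₊²) - (s-σ)² + s² - [s-a]₊² is s* = a + max(√b, σ), for any a, b ≥ 0 and σ ≥ 0. -/
/-- The unconstrained maximizer over `s ≥ 0` of
`f(s) = min(b, [s-a]₊²) - (s-σ)² + s² - [s-a]₊²` is `s* = a + max(√b, σ)`. -/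
theorem stmt5 (a b σ : ℝ) (ha : 0 ≤ a) (hb : 0 ≤ b) (hσ : 0 ≤ σ)
    (f : ℝ → ℝ)
    (hf : ∀ s, f s = min b ((max (s - a) 0) ^ 2) - (s - σ) ^ 2 + s ^ 2
        - (max (s - a) 0) ^ 2) :
    ∀ s, 0 ≤ s → f s ≤ f (a + max (Real.sqrt b) σ) := by
  intro s hs
  have hsb : Real.sqrt b ^ 2 = b := Real.sq_sqrt hb
  have hsb0 : 0 ≤ Real.sqrt b := Real.sqrt_nonneg b
  set m := max (Real.sqrt b) σ with hm
  have hm0 : 0 ≤ m := le_trans hsb0 (le_max_left _ _)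
  have hmb : b ≤ m ^ 2 := by nlinarith [le_max_left (Real.sqrt b) σ]
  have hmσ : σ ≤ m := le_max_right _ _
  have hcases : m = Real.sqrt b ∨ m = σ := max_choice _ _
  rw [hf, hf]
  have h1 : max (a + m - a) 0 = m := by
    rw [add_sub_cancel_left]; exact max_eq_left hm0
  rw [h1, min_eq_left hmb]
  rcases le_total (s - a) 0 with h | h
  · rw [max_eq_right h]
    have h0 : min b ((0:ℝ)^2) = 0 := by norm_num [hb]
    rw [h0]
    rcases hcases with he | he <;> nlinarith [sq_nonneg (Real.sqrt b - σ)]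
  · rw [max_eq_left h]
    rcases le_total b ((s-a)^2) with h3 | h3
    · rw [min_eq_left h3]
      have ht : Real.sqrt b ≤ s - a := by nlinarith
      rcases hcases with he | he
      · have hc : σ ≤ Real.sqrt b := by rw [← he]; exact hmσ
        nlinarith [mul_nonneg (by nlinarith : (0:ℝ) ≤ s - a - Real.sqrt b)
          (by nlinarith : (0:ℝ) ≤ s - a + Real.sqrt b - 2*σ)]
      · nlinarith [sq_nonneg (s - a - σ)]
    · rw [min_eq_right h3]
      have ht : s - a ≤ Real.sqrt b := by nlinarith
      rcases hcases with he | he <;> nlinarith [sq_nonneg (Real.sqrt b - σ)]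
end

section
/- Fix ρ > 0, a, b ≥ 0, σ ≥ 0. The maximizer over s ≥ 0 of g(s) = min(b, [s-a]₊²) - ((ρ+1)/ρ)(s-σ)² + s² - [s-a]₊² is: s* = aρ/(ρ+1) + σ if a/(ρ+1) + √b < σ; s* = a + √b if (a+√b)/(1+ρ) ≤ σ ≤ a/(ρ+1) + √b; and s* = (1+ρ)σ if σ < (a+√b)/(1+ρ). -/
set_option maxHeartbeats 1000000

/-- The maximizer over `s ≥ 0` of `g(s) = min(b,[s-a]₊²) - ((ρ+1)/ρ)(s-σ)² + s² - [s-a]₊²`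
is `aρ/(ρ+1) + σ` if `a/(ρ+1) + √b < σ`; `a + √b` if
`(a+√b)/(1+ρ) ≤ σ ≤ a/(ρ+1) + √b`; and `(1+ρ)σ` if `σ < (a+√b)/(1+ρ)`. -/
theorem stmt13 (ρ a b σ : ℝ) (hρ : 0 < ρ) (ha : 0 ≤ a) (hb : 0 ≤ b) (hσ : 0 ≤ σ)
    (g : ℝ → ℝ)
    (hg : ∀ s, g s = min b ((max (s - a) 0) ^ 2) - ((ρ + 1) / ρ) * (s - σ) ^ 2
        + s ^ 2 - (max (s - a) 0) ^ 2) :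
    ∀ s, 0 ≤ s →
      g s ≤ g (if a / (ρ + 1) + Real.sqrt b < σ then a * ρ / (ρ + 1) + σ
        else if σ < (a + Real.sqrt b) / (1 + ρ) then (1 + ρ) * σ
        else a + Real.sqrt b) := by
  intro s hs
  have hρ1 : (0:ℝ) < ρ + 1 := by linarith
  have h1ρ : (0:ℝ) < 1 + ρ := by linarith
  have hρ0 : ρ ≠ 0 := ne_of_gt hρ
  have hρ10 : ρ + 1 ≠ 0 := ne_of_gt hρ1
  have hr0 : 0 ≤ Real.sqrt b := Real.sqrt_nonneg b
  have hr2 : Real.sqrt b ^ 2 = b := Real.sq_sqrt hb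
  set r := Real.sqrt b with hrdef
  have hm0 : (0:ℝ) ≤ max (s - a) 0 := le_max_right _ _
  have hm1 : s - a ≤ max (s - a) 0 := le_max_left _ _
  split_ifs with h1 h2
  · -- branch 1 : t = aρ/(ρ+1)+σ
    have h1' : a + r * (ρ + 1) < σ * (ρ + 1) := by
      have := (div_lt_iff₀ hρ1).mp (show a / (ρ+1) < σ - r by linarith)
      nlinarith
    rw [hg, hg]
    have hta : a * ρ / (ρ + 1) + σ - a = σ - a / (ρ + 1) := by field_simp; ring
    have hta2 : r ≤ a * ρ / (ρ + 1) + σ - a := by rw [hta]; linarith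
    have htnn : (0:ℝ) ≤ a * ρ / (ρ + 1) + σ - a := le_trans hr0 hta2
    rw [max_eq_left htnn, min_eq_left (by nlinarith : b ≤ (a * ρ / (ρ + 1) + σ - a)^2)]
    rcases le_total b ((max (s-a) 0)^2) with hbm | hbm
    · rw [min_eq_left hbm]
      rcases max_choice (s-a) 0 with hmc | hmc
      · rw [hmc] at hbm hm0 ⊢
        rw [← sub_nonneg]
        have hD : (0:ℝ) ≤ ((1+ρ)*(s-σ) - a*ρ)^2 / (ρ*(ρ+1)) :=
          div_nonneg (sq_nonneg _) (by positivity)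
        convert hD using 1
        field_simp
        ring
      · rw [hmc] at hbm ⊢
        have hsa : s ≤ a := by linarith [hmc ▸ hm1]
        rw [← sub_nonneg]
        have hN : (0:ℝ) ≤ ((1+ρ)*σ - a)^2 + (1+ρ)*((a-s)*(2*(1+ρ)*σ-a-s)) := by
          have f1 : (0:ℝ) ≤ a - s := by linarith
          have f2 : (0:ℝ) ≤ 2*(1+ρ)*σ-a-s := by nlinarith [mul_nonneg hr0 hρ1.le]
          nlinarith [mul_nonneg h1ρ.le (mul_nonneg f1 f2), sq_nonneg ((1+ρ)*σ - a)]
        have hD : (0:ℝ) ≤ (((1+ρ)*σ - a)^2 + (1+ρ)*((a-s)*(2*(1+ρ)*σ-a-s))) / (ρ*(ρ+1)) :=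
          div_nonneg hN (by positivity)
        convert hD using 1
        field_simp
        ring
    · rw [min_eq_right hbm]
      have hmr : max (s-a) 0 ≤ r := by nlinarith
      have hsr : s ≤ a + r := by linarith
      rw [← sub_nonneg]
      have hN : (0:ℝ) ≤ (1+ρ)*((1+ρ)*σ-s)^2 - ρ*((1+ρ)*σ-a)^2 + ρ*(1+ρ)*b := by
        have f1 : (0:ℝ) ≤ a + r - s := by linarith
        have f2 : (0:ℝ) ≤ 2*(1+ρ)*σ-s-a-r := by nlinarith [mul_nonneg hr0 hρ1.le]
        have hrb : ρ*(1+ρ)*r^2 = ρ*(1+ρ)*b := by rw [hr2]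
        nlinarith [mul_nonneg h1ρ.le (mul_nonneg f1 f2),
          sq_nonneg ((1+ρ)*σ - a - (1+ρ)*r), hrb]
      have hD : (0:ℝ) ≤ ((1+ρ)*((1+ρ)*σ-s)^2 - ρ*((1+ρ)*σ-a)^2 + ρ*(1+ρ)*b) / (ρ*(ρ+1)) :=
        div_nonneg hN (by positivity)
      convert hD using 1
      field_simp
      ring
  · -- branch 2 : t = (1+ρ)σ
    have h2' : σ * (1+ρ) < a + r := (lt_div_iff₀ h1ρ).mp h2
    rw [hg, hg]
    have hmtr : max ((1+ρ)*σ - a) 0 ≤ r := max_le (by nlinarith) hr0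
    have hmt0 : (0:ℝ) ≤ max ((1+ρ)*σ - a) 0 := le_max_right _ _
    rw [min_eq_right (by nlinarith : (max ((1+ρ)*σ - a) 0)^2 ≤ b)]
    rcases le_total b ((max (s-a) 0)^2) with hbm | hbm
    · rw [min_eq_left hbm]
      rw [← sub_nonneg]
      have hD : (0:ℝ) ≤ ((s-(1+ρ)*σ)^2 + ρ*((max (s-a) 0)^2 - b)) / ρ :=
        div_nonneg (by nlinarith [sq_nonneg (s-(1+ρ)*σ), mul_nonneg hρ.le (by linarith : (0:ℝ) ≤ (max (s-a) 0)^2 - b)]) hρ.le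
      convert hD using 1
      field_simp
      ring
    · rw [min_eq_right hbm]
      rw [← sub_nonneg]
      have hD : (0:ℝ) ≤ (s-(1+ρ)*σ)^2 / ρ := div_nonneg (sq_nonneg _) hρ.le
      convert hD using 1
      field_simp
      ring
  · -- branch 3 : t = a + r
    push_neg at h1 h2
    have h1' : σ * (ρ+1) ≤ a + r * (ρ+1) := by
      have := (le_div_iff₀ hρ1).mp (show σ - r ≤ a / (ρ+1) by linarith)
      nlinarith
    have h2' : a + r ≤ σ * (1+ρ) := (div_le_iff₀ h1ρ).mp h2
    rw [hg, hg, max_eq_left (by linarith : (0:ℝ) ≤ a + r - a)]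
    rw [min_eq_left (by nlinarith : b ≤ (a + r - a)^2)]
    rcases le_total b ((max (s-a) 0)^2) with hbm | hbm
    · rw [min_eq_left hbm]
      rcases max_choice (s-a) 0 with hmc | hmc
      · rw [hmc] at hbm hm0 ⊢
        have hsr : a + r ≤ s := by nlinarith
        rw [← sub_nonneg]
        have hN : (0:ℝ) ≤ (s-a-r)*((1+ρ)*(a+r+s-2*σ)-2*a*ρ) := by
          apply mul_nonneg (by linarith)
          nlinarith [mul_nonneg h1ρ.le (by linarith : (0:ℝ) ≤ s - a - r)]
        have hD : (0:ℝ) ≤ ((s-a-r)*((1+ρ)*(a+r+s-2*σ)-2*a*ρ)) / ρ := div_nonneg hN hρ.le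
        convert hD using 1
        field_simp
        ring
      · rw [hmc] at hbm ⊢
        have hsa : s ≤ a := by linarith [hmc ▸ hm1]
        have hb0 : b = 0 := le_antisymm (by nlinarith) hb
        have hr00 : r = 0 := by nlinarith [hr2, sq_nonneg r]
        rw [hr00, hb0, ← sub_nonneg]
        have hN : (0:ℝ) ≤ (a-s)*(2*(1+ρ)*σ-a-s) := by
          apply mul_nonneg (by linarith)
          have : a ≤ σ * (1+ρ) := by rw [hr00] at h2'; linarith
          linarith
        have hD : (0:ℝ) ≤ ((a-s)*(2*(1+ρ)*σ-a-s)) / ρ := div_nonneg hN hρ.le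
        convert hD using 1
        field_simp
        ring
    · rw [min_eq_right hbm]
      have hmr : max (s-a) 0 ≤ r := by nlinarith
      have hsr : s ≤ a + r := by linarith
      rw [← sub_nonneg]
      have hN : (0:ℝ) ≤ (a+r-s)*(2*(1+ρ)*σ-a-r-s) + ρ*(b - r^2) := by
        have f2 : (0:ℝ) ≤ 2*(1+ρ)*σ-a-r-s := by linarith
        have hrb : ρ*r^2 = ρ*b := by rw [hr2]
        nlinarith [mul_nonneg (by linarith : (0:ℝ) ≤ a+r-s) f2, hrb]
      have hD : (0:ℝ) ≤ ((a+r-s)*(2*(1+ρ)*σ-a-r-s) + ρ*(b - r^2)) / ρ := div_nonneg hN hρ.le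
      convert hD using 1
      field_simp
      ring
end

section
/- Let h be defined on nonincreasing nonnegative vectors by h(σ) = Σᵢ hᵢ(σᵢ) where hᵢ(t) = 2aᵢt + bᵢ for t ≠ 0 and hᵢ(0) = 0, with (aᵢ), (bᵢ) nonnegative nondecreasing. Then the global minimum over nonincreasing nonnegative sequences σ of h(σ) + Σᵢ (σᵢ - σᵢ(X₀))² equals Σᵢ Fᵢ where Fᵢ = 2aᵢσᵢ(X₀) - aᵢ² + bᵢ if σᵢ(X₀) - aᵢ ≥ √bᵢ and Fᵢ = σᵢ(X₀)² otherwise. -/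
lemma stmt15_pt (a b s t : ℝ) (ha : 0 ≤ a) (hb : 0 ≤ b) (hs : 0 ≤ s) (ht : 0 ≤ t) :
    (if Real.sqrt b ≤ s - a then 2 * a * s - a ^ 2 + b else s ^ 2) ≤
      (if t = 0 then 0 else 2 * a * t + b) + (t - s) ^ 2 := by
  have hsq : Real.sqrt b ^ 2 = b := Real.sq_sqrt hb
  have hsn : 0 ≤ Real.sqrt b := Real.sqrt_nonneg b
  by_cases htz : t = 0
  · subst htz
    simp only [if_pos rfl]
    split_ifs with hc
    · nlinarith
    · nlinarith
  · have ht' : 0 < t := lt_of_le_of_ne ht (Ne.symm htz)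
    simp only [if_neg htz]
    split_ifs with hc
    · nlinarith [sq_nonneg (t - (s - a))]
    · push_neg at hc
      nlinarith [sq_nonneg (t - Real.sqrt b), mul_pos ht' (sub_pos.mpr hc)]

/-- The global minimum of `h(σ) + ∑ (σᵢ - σᵢ(X₀))²` over nonincreasing nonnegative
sequences, where `hᵢ(t) = 2aᵢt + bᵢ` for `t ≠ 0` and `hᵢ(0) = 0`, equals `∑ Fᵢ` with
`Fᵢ = 2aᵢσᵢ(X₀) - aᵢ² + bᵢ` if `σᵢ(X₀) - aᵢ ≥ √bᵢ` and `Fᵢ = σᵢ(X₀)²` otherwise. -/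
theorem stmt15 (k : ℕ) (a b σX₀ : Fin k → ℝ)
    (ha0 : ∀ i, 0 ≤ a i) (hb0 : ∀ i, 0 ≤ b i)
    (ham : Monotone a) (hbm : Monotone b)
    (hσ0 : ∀ i, 0 ≤ σX₀ i) (hσm : Antitone σX₀) :
    IsLeast
      {v : ℝ | ∃ σ : Fin k → ℝ, Antitone σ ∧ (∀ i, 0 ≤ σ i) ∧
        v = ∑ i, ((if σ i = 0 then 0 else 2 * a i * σ i + b i)
              + (σ i - σX₀ i) ^ 2)}
      (∑ i, if Real.sqrt (b i) ≤ σX₀ i - a i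
        then 2 * a i * σX₀ i - (a i) ^ 2 + b i
        else (σX₀ i) ^ 2) := by
  constructor
  · set σ : Fin k → ℝ := fun i =>
      if Real.sqrt (b i) ≤ σX₀ i - a i then σX₀ i - a i else 0 with hσdef
    have hnn : ∀ i, 0 ≤ σ i := by
      intro i
      simp only [hσdef]
      split_ifs with hc
      · exact le_trans (Real.sqrt_nonneg _) hc
      · exact le_refl 0
    refine ⟨σ, ?_, hnn, ?_⟩
    · intro i j hij
      by_cases hj : Real.sqrt (b j) ≤ σX₀ j - a j
      · have hi : Real.sqrt (b i) ≤ σX₀ i - a i := by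
          calc Real.sqrt (b i) ≤ Real.sqrt (b j) := Real.sqrt_le_sqrt (hbm hij)
          _ ≤ σX₀ j - a j := hj
          _ ≤ σX₀ i - a i := by have := hσm hij; have := ham hij; linarith
        simp only [hσdef, if_pos hi, if_pos hj]
        have := hσm hij; have := ham hij; linarith
      · simp only [hσdef, if_neg hj]
        exact hnn i
    · refine Finset.sum_congr rfl fun i _ => ?_
      by_cases hc : Real.sqrt (b i) ≤ σX₀ i - a i
      · have hσi : σ i = σX₀ i - a i := by simp [hσdef, hc]
        rw [if_pos hc, hσi]
        by_cases hz : σX₀ i - a i = 0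
        · have h0 : Real.sqrt (b i) = 0 := le_antisymm (hz ▸ hc) (Real.sqrt_nonneg _)
          have hb0' : b i = 0 := by
            have := Real.sq_sqrt (hb0 i); rw [h0] at this; nlinarith
          have hsa : σX₀ i = a i := by linarith
          rw [if_pos hz, hsa, hb0']; ring
        · rw [if_neg hz]; ring
      · have hσi : σ i = 0 := by simp [hσdef, hc]
        rw [if_neg hc, hσi]
        simp [sub_sq]
  · rintro v ⟨σ, hσa, hσn, rfl⟩
    exact Finset.sum_le_sum fun i _ =>
      stmt15_pt (a i) (b i) (σX₀ i) (σ i) (ha0 i) (hb0 i) (hσ0 i) (hσn i)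
end
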